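/- Let L : ℝ⁴ → ℝ be C¹ and invariant under the diagonal action of a one-parameter group generated by a vector field ξ_Y on ℝ: L(F_t(y₁),…,F_t(y₄)) = L(y₁,…,y₄) where F_t is the flow of ξ_Y. If φ : cl U → ℝ solves the discrete Euler–Lagrange equations at all interior points of a finite regular set U ⊆ ℤ², then Σ over (i,j) ∈ ∂U and over rectangles □ ⊆ U with (i,j) = □^l of (∂L/∂y_l)(φ(□^1),…,φ(□^4)) · ξ_Y(φ(□^l)) equals 0 (the discrete Noether theorem). -/

import Mathlib

open scoped BigOperators

/-- The four vertices of the grid rectangle with base point `b`. -/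
def vert (b : ℤ × ℤ) : Fin 4 → ℤ × ℤ :=
  ![b, (b.1 + 1, b.2), (b.1 + 1, b.2 + 1), (b.1, b.2 + 1)]

/-- Base point of the rectangle having `p` as its `l`-th vertex. -/
def rbase (p : ℤ × ℤ) : Fin 4 → ℤ × ℤ :=
  ![p, (p.1 - 1, p.2), (p.1 - 1, p.2 - 1), (p.1, p.2 - 1)]

/-- The values of a field `φ` at the four vertices of the rectangle at `b`. -/
def args (φ : ℤ × ℤ → ℝ) (b : ℤ × ℤ) : Fin 4 → ℝ := fun k => φ (vert b k)

/-- Standard basis vector of `ℝ⁴`. -/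
noncomputable def E4 (l : Fin 4) : Fin 4 → ℝ := Pi.single l 1

/-- The rectangle at `b` is contained in `U`. -/
def rectIn (U : Set (ℤ × ℤ)) (b : ℤ × ℤ) : Prop := ∀ k, vert b k ∈ U

/-- Interior points of `U`: all four rectangles touching the point lie in `U`. -/
def intr (U : Set (ℤ × ℤ)) : Set (ℤ × ℤ) := {p | ∀ l : Fin 4, rectIn U (rbase p l)}

/-- Closure of `U`: union of all cells touching interior points of `U`. -/
def clos (U : Set (ℤ × ℤ)) : Set (ℤ × ℤ) :=
  {q | ∃ p ∈ intr U, ∃ l k, vert (rbase p l) k = q}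

/-- Boundary points of `U`. -/
def bdry (U : Set (ℤ × ℤ)) : Set (ℤ × ℤ) := (U ∩ clos U) \ intr U


private lemma key1' (p : ℤ × ℤ) (l : Fin 4) : vert (rbase p l) l = p := by
  fin_cases l <;> simp [vert, rbase]

private lemma key2' (b : ℤ × ℤ) (l : Fin 4) : rbase (vert b l) l = b := by
  fin_cases l <;> simp [vert, rbase]

private lemma noether_rect' (L : (Fin 4 → ℝ) → ℝ) (hL : ContDiff ℝ 1 L)
    (F : ℝ → ℝ → ℝ) (hF0 : ∀ y, F 0 y = y) (ξY : ℝ → ℝ)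
    (hξ : ∀ y, HasDerivAt (fun t => F t y) (ξY y) 0)
    (hinv : ∀ t (a : Fin 4 → ℝ), L (fun k => F t (a k)) = L a)
    (a : Fin 4 → ℝ) :
    ∑ l : Fin 4, fderiv ℝ L a (E4 l) * ξY (a l) = 0 := by
  have hinner : HasDerivAt (fun t => (fun k => F t (a k))) (fun k => ξY (a k)) 0 :=
    hasDerivAt_pi.2 (fun k => hξ (a k))
  have h0 : (fun k => F 0 (a k)) = a := funext fun k => hF0 _
  have hfd : HasFDerivAt L (fderiv ℝ L a) (fun k => F 0 (a k)) := by
    rw [h0]; exact (hL.differentiable one_ne_zero a).hasFDerivAt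
  have hcomp : HasDerivAt (fun t => L (fun k => F t (a k)))
      (fderiv ℝ L a (fun k => ξY (a k))) 0 := hfd.comp_hasDerivAt 0 hinner
  have hconst : (fun t => L (fun k => F t (a k))) = fun _ => L a := funext fun t => hinv t a
  have hz : fderiv ℝ L a (fun k => ξY (a k)) = 0 := by
    rw [hconst] at hcomp
    exact hcomp.unique (hasDerivAt_const 0 (L a))
  have hv : (fun k => ξY (a k)) = ∑ l : Fin 4, ξY (a l) • E4 l := by
    simp [E4, ← Pi.single_smul, Finset.univ_sum_single]
  rw [hv, map_sum] at hz
  simpa [mul_comm] using hz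

/-- The discrete Noether theorem: if `L` is invariant under the diagonal action of the
flow `F` of the vector field `ξ_Y` on `ℝ`, and `φ` solves the discrete Euler–Lagrange
equations at all interior points of a finite regular `U`, then the boundary sum of
the discrete momenta vanishes. -/
theorem stmt15 (U : Set (ℤ × ℤ)) (hUfin : U.Finite)
    (hreg : U = intr U ∪ bdry U)
    (L : (Fin 4 → ℝ) → ℝ) (hL : ContDiff ℝ 1 L)
    (F : ℝ → ℝ → ℝ)
    (hF0 : ∀ y, F 0 y = y)
    (hFgrp : ∀ s t y, F (s + t) y = F s (F t y))
    (ξY : ℝ → ℝ)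
    (hξ : ∀ y, HasDerivAt (fun t => F t y) (ξY y) 0)
    (hinv : ∀ t (a : Fin 4 → ℝ), L (fun k => F t (a k)) = L a)
    (φ : ℤ × ℤ → ℝ)
    (hφ : ∀ p ∈ intr U, ∑ l : Fin 4, fderiv ℝ L (args φ (rbase p l)) (E4 l) = 0) :
    ∑ᶠ p ∈ bdry U, ∑ᶠ l ∈ {l : Fin 4 | rectIn U (rbase p l)},
      fderiv ℝ L (args φ (rbase p l)) (E4 l) * ξY (φ p) = 0 := by
  classical
  have hrect := noether_rect' L hL F hF0 ξY hξ hinv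
  set m : (ℤ × ℤ) → Fin 4 → ℝ :=
    fun p l => fderiv ℝ L (args φ (rbase p l)) (E4 l) * ξY (φ p) with hm
  set g : (ℤ × ℤ) → ℝ :=
    fun p => ∑ l : Fin 4, if rectIn U (rbase p l) then m p l else 0 with hg
  have hinner : ∀ p, (∑ᶠ l ∈ {l : Fin 4 | rectIn U (rbase p l)}, m p l) = g p := by
    intro p
    have : {l : Fin 4 | rectIn U (rbase p l)} =
        ↑(Finset.univ.filter (fun l => rectIn U (rbase p l))) := by
      ext l; simp
    rw [this, finsum_mem_coe_finset, Finset.sum_filter]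
  set T := hUfin.toFinset with hT
  have hbd : bdry U = ↑(T.filter (fun p => p ∉ intr U)) := by
    ext p
    simp only [Finset.coe_filter, hT, Set.Finite.mem_toFinset, Set.mem_setOf_eq]
    constructor
    · intro hp; exact ⟨hp.1.1, hp.2⟩
    · rintro ⟨hpU, hpi⟩
      rcases (hreg ▸ hpU : p ∈ intr U ∪ bdry U) with h | h
      · exact absurd h hpi
      · exact h
  calc ∑ᶠ p ∈ bdry U, ∑ᶠ l ∈ {l : Fin 4 | rectIn U (rbase p l)}, m p l
      = ∑ p ∈ T.filter (fun p => p ∉ intr U), g p := by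
        rw [hbd, finsum_mem_coe_finset]
        exact Finset.sum_congr rfl fun p _ => hinner p
    _ = ∑ p ∈ T, g p := by
        rw [← Finset.sum_filter_add_sum_filter_not T (fun p => p ∉ intr U) g]
        have : ∑ p ∈ T.filter (fun p => ¬ p ∉ intr U), g p = 0 := by
          apply Finset.sum_eq_zero
          intro p hp
          simp only [Finset.mem_filter, not_not] at hp
          have hpi := hp.2
          have : g p = (∑ l : Fin 4, fderiv ℝ L (args φ (rbase p l)) (E4 l)) * ξY (φ p) := by
            rw [hg, Finset.sum_mul]
            exact Finset.sum_congr rfl fun l _ => by simp [hm, if_pos (hpi l)]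
          rw [this, hφ p hpi, zero_mul]
        rw [this, add_zero]
    _ = ∑ l : Fin 4, ∑ p ∈ T, (if rectIn U (rbase p l) then m p l else 0) :=
        Finset.sum_comm
    _ = ∑ l : Fin 4, ∑ b ∈ T.filter (fun b => rectIn U b),
          fderiv ℝ L (args φ b) (E4 l) * ξY (φ (vert b l)) := by
        refine Finset.sum_congr rfl fun l _ => ?_
        rw [← Finset.sum_filter]
        refine Finset.sum_nbij' (fun p => rbase p l) (fun b => vert b l) ?_ ?_ ?_ ?_ ?_
        · intro p hp
          simp only [Finset.mem_filter, hT, Set.Finite.mem_toFinset] at hp ⊢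
          exact ⟨hp.2 0, hp.2⟩
        · intro b hb
          simp only [Finset.mem_filter, hT, Set.Finite.mem_toFinset] at hb ⊢
          exact ⟨hb.2 l, by rw [key2']; exact hb.2⟩
        · intro p _; exact key1' p l
        · intro b _; exact key2' b l
        · intro p _; rw [hm]; simp only []; rw [key1']
    _ = ∑ b ∈ T.filter (fun b => rectIn U b), ∑ l : Fin 4,
          fderiv ℝ L (args φ b) (E4 l) * ξY (φ (vert b l)) := Finset.sum_comm
    _ = 0 := Finset.sum_eq_zero fun b _ => hrect (args φ b)
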